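/- Let X be a compact Hausdorff topological space and let B be a closed unital star-subalgebra of the C*-algebra C(X, ℂ) of continuous complex-valued functions on X. Then the map ρ : X → characterSpace(ℂ, B) sending a point x ∈ X to the character b ↦ b(x) (evaluation at x restricted to B) is continuous and surjective; consequently, since X is compact and the character space is Hausdorff, ρ is a quotient map. -/
import Mathlib


set_option maxHeartbeats 1000000
open WeakDual WeakDual.CharacterSpace

/-- For a compact Hausdorff space `X` and a closed unital star-subalgebra `B` of
`C(X, ℂ)`, the map `ρ : X → characterSpace ℂ B` sending `x` to evaluation at `x` (restricted
to `B`) is continuous and surjective, hence a quotient map. -/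
theorem statement4 {X : Type*} [TopologicalSpace X] [CompactSpace X] [T2Space X]
    (B : StarSubalgebra ℂ C(X, ℂ)) (hB : IsClosed (B : Set C(X, ℂ))) :
    ∃ ρ : X → characterSpace ℂ B,
      (∀ (x : X) (b : B), ρ x b = (b : C(X, ℂ)) x) ∧
      Continuous ρ ∧ Function.Surjective ρ ∧ Topology.IsQuotientMap ρ := by
  haveI : CompleteSpace B := hB.completeSpace_coe
  set ρ : X → characterSpace ℂ B :=
    fun x => compContinuousMap (B.subtype) (homeoEval X ℂ x) with hρ
  have hval : ∀ (x : X) (b : B), ρ x b = (b : C(X, ℂ)) x := fun x b => rfl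
  have hcont : Continuous ρ :=
    (compContinuousMap (B.subtype)).continuous.comp (homeoEval X ℂ).continuous
  have hsurj : Function.Surjective ρ := by
    intro φ
    -- the sets where b agrees with φ b
    have hKclosed : ∀ b : B, IsClosed {x : X | (b : C(X, ℂ)) x = φ b} := fun b =>
      isClosed_eq (b : C(X, ℂ)).continuous continuous_const
    by_contra h
    push_neg at h
    have hempty : (Set.univ : Set X) ∩ ⋂ b : B, {x : X | (b : C(X, ℂ)) x = φ b} = ∅ := by
      rw [Set.univ_inter, Set.eq_empty_iff_forall_notMem]
      intro x hx
      refine h x (Subtype.ext (ContinuousLinearMap.ext fun b => ?_))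
      exact Set.mem_iInter.mp hx b
    obtain ⟨t, ht⟩ := isCompact_univ.elim_finite_subfamily_closed _ hKclosed hempty
    rw [Set.univ_inter, Set.eq_empty_iff_forall_notMem] at ht
    -- build the element c
    set c : B := ∑ b ∈ t, star (b - φ b • 1) * (b - φ b • 1) with hc
    have hφc : φ c = 0 := by
      rw [hc, map_sum]
      refine Finset.sum_eq_zero fun b hb => ?_
      have : φ (b - φ b • 1) = 0 := by
        simp [map_sub, map_smul]
      rw [map_mul, this, mul_zero]
    have hunit : IsUnit (c : C(X, ℂ)) := by
      rw [ContinuousMap.isUnit_iff_forall_ne_zero]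
      intro x
      have hx := ht x
      simp only [Set.mem_iInter, Set.mem_setOf_eq, not_forall] at hx
      obtain ⟨b, hb, hbx⟩ := hx
      have hcx : ((c : C(X, ℂ)) x).re > 0 := by
        have hcoe : (c : C(X, ℂ)) x = ∑ b ∈ t, Complex.normSq ((b : C(X, ℂ)) x - φ b) := by
          rw [hc]
          push_cast [map_sum]
          rw [ContinuousMap.sum_apply]
          refine Finset.sum_congr rfl fun b hb => ?_
          simp [Complex.normSq_eq_conj_mul_self, mul_comm]
        rw [hcoe]
        rw [Complex.ofReal_re]
        refine Finset.sum_pos' (fun i _ => Complex.normSq_nonneg _) ⟨b, hb, ?_⟩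
        exact Complex.normSq_pos.mpr (sub_ne_zero.mpr hbx)
      intro hzero
      rw [hzero] at hcx
      simp at hcx
    have hunit' : IsUnit c := (B.coe_isUnit (hS := hB)).mp hunit
    exact (hunit'.map φ).ne_zero hφc
  exact ⟨ρ, hval, hcont, hsurj, hcont.isClosedMap.isQuotientMap hcont hsurj⟩
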